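/- The projector M₃,₁ = (Σ_{k=1}^{d−1}|k⟩⟨k|_E) ⊗ |0⟩⟨0|_{e₁} ⊗ |0⟩⟨0|_{e₂}, tensored with the identity on all other factors, acts as the identity on every post-measurement state arising from a state of H₄, and annihilates every post-measurement state arising from a state of any other subset H_k, k ≠ 4, of set (5). (Step 2 of the proof of Theorem 10: Eve's first measurement exactly isolates the subset H₄.) -/

import Mathlib

noncomputable section

/-- View a coefficient function as a vector of the Euclidean (Hilbert) space. -/
def ofFun {ι : Type*} [Fintype ι] (f : ι → ℂ) : EuclideanSpace ℂ ι := WithLp.toLp 2 f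

/-- Transport an endomorphism of the coefficient functions to the Euclidean space. -/
def toE {ι : Type*} [Fintype ι] (T : (ι → ℂ) →ₗ[ℂ] (ι → ℂ)) :
    Module.End ℂ (EuclideanSpace ℂ ι) :=
  (WithLp.linearEquiv 2 ℂ (ι → ℂ)).symm.toLinearMap ∘ₗ T ∘ₗ
    (WithLp.linearEquiv 2 ℂ (ι → ℂ)).toLinearMap

open Classical in
/-- Diagonal orthogonal projection keeping exactly the basis vectors whose index
satisfies `f`. -/
def diagP {ι : Type*} [Fintype ι] (f : ι → Prop) : Module.End ℂ (EuclideanSpace ℂ ι) :=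
  toE (LinearMap.pi fun i => (if f i then (1 : ℂ) else 0) • LinearMap.proj i)

/-- Tensor product of two vectors, realized on the product index set. -/
def tensE {ι κ : Type*} [Fintype ι] [Fintype κ]
    (u : EuclideanSpace ℂ ι) (w : EuclideanSpace ℂ κ) : EuclideanSpace ℂ (ι × κ) :=
  ofFun fun p => u p.1 * w p.2

/-- The root of unity `ω_n = e^{2πi/n}`. -/
def omegaC (n : ℕ) : ℂ := Complex.exp (2 * Real.pi * Complex.I / n)

/-- Computational basis vector `|k⟩` of `ℂ^d`. -/
def ketD (d k : ℕ) : EuclideanSpace ℂ (Fin d) :=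
  ofFun fun u => if (u : ℕ) = k then 1 else 0

/-- The (unnormalized) vector `|α_i⟩ = Σ_{u=0}^{d−1} ω_d^{iu}|u⟩`. -/
def alphaD (d i : ℕ) : EuclideanSpace ℂ (Fin d) :=
  ofFun fun u => omegaC d ^ (i * (u : ℕ))

/-- The (unnormalized) vector `|γ_m⟩ = Σ_{u=0}^{d−2} ω_{d−1}^{mu}|u+1⟩`. -/
def gammaD (d m : ℕ) : EuclideanSpace ℂ (Fin d) :=
  ofFun fun u => if (u : ℕ) = 0 then 0 else omegaC (d - 1) ^ (m * ((u : ℕ) - 1))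

/-- Tensor product of five vectors of `ℂ^d`, realized on the index set `Fin 5 → Fin d`. -/
def tp5 {d : ℕ} (v0 v1 v2 v3 v4 : EuclideanSpace ℂ (Fin d)) :
    EuclideanSpace ℂ (Fin 5 → Fin d) :=
  ofFun fun x => v0 (x 0) * v1 (x 1) * v2 (x 2) * v3 (x 3) * v4 (x 4)

/-- The states of set (5): family `k : Fin 10` corresponds to `H_{k+1}`; the parameter
`a` is the spectral parameter (`i ∈ ℤ_d` for `H₁,…,H₅`, `m ∈ ℤ_{d−1}` for `H₆,…,H₁₀`),
and `p` is the index of the computational basis vector `|p⟩ ∈ {|1⟩,…,|d−1⟩}`. -/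
def stateOf (d : ℕ) (k : Fin 10) (a p : ℕ) : EuclideanSpace ℂ (Fin 5 → Fin d) :=
  if k = 0 then tp5 (alphaD d a) (alphaD d a) (ketD d p) (ketD d 0) (ketD d 0)
  else if k = 1 then tp5 (alphaD d a) (ketD d p) (ketD d 0) (ketD d 0) (alphaD d a)
  else if k = 2 then tp5 (ketD d p) (ketD d 0) (ketD d 0) (alphaD d a) (alphaD d a)
  else if k = 3 then tp5 (ketD d 0) (ketD d 0) (alphaD d a) (alphaD d a) (ketD d p)
  else if k = 4 then tp5 (ketD d 0) (alphaD d a) (alphaD d a) (ketD d p) (ketD d 0)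
  else if k = 5 then tp5 (gammaD d a) (ketD d 0) (ketD d p) (ketD d 0) (ketD d 1)
  else if k = 6 then tp5 (ketD d 0) (ketD d p) (ketD d 0) (ketD d 1) (gammaD d a)
  else if k = 7 then tp5 (ketD d p) (ketD d 0) (ketD d 1) (gammaD d a) (ketD d 0)
  else if k = 8 then tp5 (ketD d 0) (ketD d 1) (gammaD d a) (ketD d 0) (ketD d p)
  else tp5 (ketD d 1) (gammaD d a) (ketD d 0) (ketD d p) (ketD d 0)

/-- Ranges of the parameters of the states of set (5). -/
def validIdx (d : ℕ) (k : Fin 10) (a p : ℕ) : Prop :=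
  (if (k : ℕ) < 5 then a < d else a < d - 1) ∧ 1 ≤ p ∧ p < d

/-- The full Hilbert space: five `ℂ^d` subsystems `A,B,C,D,E` (positions `0,…,4`),
ancilla qubits `a,b` (first `Fin 2 → Fin 2` factor, attached to `A,B`), ancilla
qubits `c₁,c₂` (second factor, held by Charlie), `v₁,v₂` (third factor, held by
Dave), and `e₁,e₂` (fourth factor, held by Eve). -/
abbrev WF (d : ℕ) : Type :=
  EuclideanSpace ℂ
    ((Fin 5 → Fin d) ×
      ((Fin 2 → Fin 2) × (Fin 2 → Fin 2) × (Fin 2 → Fin 2) × (Fin 2 → Fin 2)))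

/-- The ancilla state `|F⟩_{ac₁v₁e₁} ⊗ |F⟩_{bc₂v₂e₂}`, where
`|F⟩ = (|0000⟩+|1111⟩)/√2`. -/
def ancF :
    EuclideanSpace ℂ
      ((Fin 2 → Fin 2) × (Fin 2 → Fin 2) × (Fin 2 → Fin 2) × (Fin 2 → Fin 2)) :=
  ofFun fun q =>
    ∏ k : Fin 2,
      (if q.1 k = q.2.1 k ∧ q.2.1 k = q.2.2.1 k ∧ q.2.2.1 k = q.2.2.2 k then
        (Real.sqrt 2 : ℂ)⁻¹ else 0)

/-- The measurement projector
`Q_{Xx} = |0⟩⟨0|_X ⊗ |0⟩⟨0|_x + (Σ_{k=1}^{d−1}|k⟩⟨k|_X) ⊗ |1⟩⟨1|_x`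
on the main subsystem at position `X` and its ancilla qubit at position `j`. -/
def QprojF (d : ℕ) (X : Fin 5) (j : Fin 2) : Module.End ℂ (WF d) :=
  diagP fun q => ((q.1 X : ℕ) = 0 ∧ q.2.1 j = 0) ∨ ((q.1 X : ℕ) ≠ 0 ∧ q.2.1 j = 1)

/-- The post-measurement state
`(Q_{Aa}Q_{Bb})(|h⟩ ⊗ |F⟩_{ac₁v₁e₁} ⊗ |F⟩_{bc₂v₂e₂})`. -/
def postF (d : ℕ) (h : EuclideanSpace ℂ (Fin 5 → Fin d)) : WF d :=
  (QprojF d 0 0 * QprojF d 1 1) (tensE h ancF)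

/-- Eve's projector
`M₃,₁ = (Σ_{k=1}^{d−1}|k⟩⟨k|_E) ⊗ |0⟩⟨0|_{e₁} ⊗ |0⟩⟨0|_{e₂}`. -/
def eveM31 (d : ℕ) : Module.End ℂ (WF d) :=
  diagP fun q => (q.1 4 : ℕ) ≠ 0 ∧ q.2.2.2.2 0 = 0 ∧ q.2.2.2.2 1 = 0


open Classical in
lemma diagP_apply' {ι : Type*} [Fintype ι] (f : ι → Prop) (v : EuclideanSpace ℂ ι) (i : ι) :
    diagP f v i = if f i then v i else 0 := by
  classical
  by_cases h : f i <;>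
    simp [diagP, toE, LinearMap.pi_apply, h, WithLp.linearEquiv, ofFun]

lemma tp5_apply {d : ℕ} (v0 v1 v2 v3 v4 : EuclideanSpace ℂ (Fin d)) (x : Fin 5 → Fin d) :
    tp5 v0 v1 v2 v3 v4 x = v0 (x 0) * v1 (x 1) * v2 (x 2) * v3 (x 3) * v4 (x 4) := rfl

lemma ketD_apply (d k : ℕ) (u : Fin d) : ketD d k u = if (u : ℕ) = k then 1 else 0 := rfl

lemma gammaD_apply (d m : ℕ) (u : Fin d) :
    gammaD d m u = if (u : ℕ) = 0 then 0 else omegaC (d - 1) ^ (m * ((u : ℕ) - 1)) := rfl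

lemma ancF_eq_zero
    (q : (Fin 2 → Fin 2) × (Fin 2 → Fin 2) × (Fin 2 → Fin 2) × (Fin 2 → Fin 2))
    (k : Fin 2) (h : q.1 k ≠ q.2.2.2 k) : ancF q = 0 := by
  show (∏ j : Fin 2,
      (if q.1 j = q.2.1 j ∧ q.2.1 j = q.2.2.1 j ∧ q.2.2.1 j = q.2.2.2 j then
        ((Real.sqrt 2 : ℂ))⁻¹ else 0)) = 0
  apply Finset.prod_eq_zero (Finset.mem_univ k)
  rw [if_neg]
  rintro ⟨h1, h2, h3⟩
  exact h (h1.trans (h2.trans h3))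

open Classical in
lemma postF_apply (d : ℕ) (h : EuclideanSpace ℂ (Fin 5 → Fin d))
    (q : (Fin 5 → Fin d) ×
      ((Fin 2 → Fin 2) × (Fin 2 → Fin 2) × (Fin 2 → Fin 2) × (Fin 2 → Fin 2))) :
    postF d h q =
      if ((q.1 0 : ℕ) = 0 ∧ q.2.1 0 = 0) ∨ ((q.1 0 : ℕ) ≠ 0 ∧ q.2.1 0 = 1) then
        (if ((q.1 1 : ℕ) = 0 ∧ q.2.1 1 = 0) ∨ ((q.1 1 : ℕ) ≠ 0 ∧ q.2.1 1 = 1) then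
          h q.1 * ancF q.2 else 0)
      else 0 := by
  show (QprojF d 0 0) ((QprojF d 1 1) (tensE h ancF)) q = _
  simp only [QprojF]
  rw [diagP_apply', diagP_apply']
  split_ifs <;> rfl

open Classical in
lemma eveM31_apply (d : ℕ) (v : WF d)
    (q : (Fin 5 → Fin d) ×
      ((Fin 2 → Fin 2) × (Fin 2 → Fin 2) × (Fin 2 → Fin 2) × (Fin 2 → Fin 2))) :
    eveM31 d v q =
      if (q.1 4 : ℕ) ≠ 0 ∧ q.2.2.2.2 0 = 0 ∧ q.2.2.2.2 1 = 0 then v q else 0 := by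
  rw [eveM31, diagP_apply']
  split_ifs <;> rfl

lemma stateOf_eq_0 (d a p : ℕ) : stateOf d 0 a p =
    tp5 (alphaD d a) (alphaD d a) (ketD d p) (ketD d 0) (ketD d 0) := rfl
lemma stateOf_eq_1 (d a p : ℕ) : stateOf d 1 a p =
    tp5 (alphaD d a) (ketD d p) (ketD d 0) (ketD d 0) (alphaD d a) := rfl
lemma stateOf_eq_2 (d a p : ℕ) : stateOf d 2 a p =
    tp5 (ketD d p) (ketD d 0) (ketD d 0) (alphaD d a) (alphaD d a) := rfl
lemma stateOf_eq_3 (d a p : ℕ) : stateOf d 3 a p =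
    tp5 (ketD d 0) (ketD d 0) (alphaD d a) (alphaD d a) (ketD d p) := rfl
lemma stateOf_eq_4 (d a p : ℕ) : stateOf d 4 a p =
    tp5 (ketD d 0) (alphaD d a) (alphaD d a) (ketD d p) (ketD d 0) := rfl
lemma stateOf_eq_5 (d a p : ℕ) : stateOf d 5 a p =
    tp5 (gammaD d a) (ketD d 0) (ketD d p) (ketD d 0) (ketD d 1) := rfl
lemma stateOf_eq_6 (d a p : ℕ) : stateOf d 6 a p =
    tp5 (ketD d 0) (ketD d p) (ketD d 0) (ketD d 1) (gammaD d a) := rfl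
lemma stateOf_eq_7 (d a p : ℕ) : stateOf d 7 a p =
    tp5 (ketD d p) (ketD d 0) (ketD d 1) (gammaD d a) (ketD d 0) := rfl
lemma stateOf_eq_8 (d a p : ℕ) : stateOf d 8 a p =
    tp5 (ketD d 0) (ketD d 1) (gammaD d a) (ketD d 0) (ketD d p) := rfl
lemma stateOf_eq_9 (d a p : ℕ) : stateOf d 9 a p =
    tp5 (ketD d 1) (gammaD d a) (ketD d 0) (ketD d p) (ketD d 0) := rfl

/-- Step 2 of Theorem 10: `M₃,₁` acts as the identity on every
post-measurement state arising from a state of `H₄`, and annihilates every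
post-measurement state arising from a state of any other subset `H_k`, `k ≠ 4`. -/
theorem thm10_step2_eve_isolates_H4 (d : ℕ) (hd : 3 ≤ d) :
    (∀ a p, validIdx d 3 a p →
      eveM31 d (postF d (stateOf d 3 a p)) = postF d (stateOf d 3 a p)) ∧
    (∀ k : Fin 10, k ≠ 3 → ∀ a p, validIdx d k a p →
      eveM31 d (postF d (stateOf d k a p)) = 0) := by
  constructor
  · rintro a p ⟨-, hp1, hp2⟩
    ext q
    rw [eveM31_apply]
    split_ifs with hE
    · rfl
    · symm
      rw [postF_apply]
      split_ifs with hQA hQB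
      · rcases hQA with ⟨h0, ha0⟩ | ⟨h0, ha1⟩
        · rcases hQB with ⟨h1, hb0⟩ | ⟨h1, hb1⟩
          · by_cases h4 : (q.1 4 : ℕ) = 0
            · have hz : stateOf d 3 a p q.1 = 0 := by
                simp [stateOf_eq_3, tp5_apply, ketD_apply,
                  show ¬ ((q.1 4 : ℕ) = p) by omega]
              rw [hz, zero_mul]
            · have he : q.2.2.2.2 0 ≠ 0 ∨ q.2.2.2.2 1 ≠ 0 := by
                by_contra hc
                push_neg at hc
                exact hE ⟨h4, hc.1, hc.2⟩
              rcases he with he | he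
              · rw [ancF_eq_zero q.2 0 (by simp [ha0]; exact fun hh => he hh.symm),
                  mul_zero]
              · rw [ancF_eq_zero q.2 1 (by simp [hb0]; exact fun hh => he hh.symm),
                  mul_zero]
          · simp [stateOf_eq_3, tp5_apply, ketD_apply, h1]
        · have hz : stateOf d 3 a p q.1 = 0 := by
            simp [stateOf_eq_3, tp5_apply, ketD_apply, h0]
          rw [hz, zero_mul]
      · rfl
      · rfl
  · intro k hk a p hv
    ext q
    rw [eveM31_apply]
    show _ = (0 : ℂ)
    split_ifs with hE
    · rw [postF_apply]
      obtain ⟨h4, he0, he1⟩ := hE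
      obtain ⟨-, hp1, hp2⟩ := hv
      split_ifs with hQA hQB
      · fin_cases k
        · -- k = 0
          simp [stateOf_eq_0, tp5_apply, ketD_apply, h4]
        · -- k = 1, B = |p>
          rcases hQB with ⟨h1, hb0⟩ | ⟨h1, hb1⟩
          · simp [stateOf_eq_1, tp5_apply, ketD_apply, show ¬ ((q.1 1 : ℕ) = p) by omega]
          · rw [ancF_eq_zero q.2 1 (by simp [hb1, he1]), mul_zero]
        · -- k = 2, A = |p>
          rcases hQA with ⟨h0, ha0⟩ | ⟨h0, ha1⟩
          · simp [stateOf_eq_2, tp5_apply, ketD_apply, show ¬ ((q.1 0 : ℕ) = p) by omega]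
          · rw [ancF_eq_zero q.2 0 (by simp [ha1, he0]), mul_zero]
        · -- k = 3, excluded
          exact absurd rfl hk
        · -- k = 4
          simp [stateOf_eq_4, tp5_apply, ketD_apply, h4]
        · -- k = 5, A = gamma
          rcases hQA with ⟨h0, ha0⟩ | ⟨h0, ha1⟩
          · simp [stateOf_eq_5, tp5_apply, gammaD_apply, h0]
          · rw [ancF_eq_zero q.2 0 (by simp [ha1, he0]), mul_zero]
        · -- k = 6, B = |p>
          rcases hQB with ⟨h1, hb0⟩ | ⟨h1, hb1⟩
          · simp [stateOf_eq_6, tp5_apply, ketD_apply, show ¬ ((q.1 1 : ℕ) = p) by omega]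
          · rw [ancF_eq_zero q.2 1 (by simp [hb1, he1]), mul_zero]
        · -- k = 7
          simp [stateOf_eq_7, tp5_apply, ketD_apply, h4]
        · -- k = 8, B = |1>
          rcases hQB with ⟨h1, hb0⟩ | ⟨h1, hb1⟩
          · simp [stateOf_eq_8, tp5_apply, ketD_apply, show ¬ ((q.1 1 : ℕ) = 1) by omega]
          · rw [ancF_eq_zero q.2 1 (by simp [hb1, he1]), mul_zero]
        · -- k = 9
          simp [stateOf_eq_9, tp5_apply, ketD_apply, h4]
      · rfl
      · rfl
    · rfl
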